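/- For every positive integer m and every μ > 0, α_m(μ) is the unique negative value of α for which h_{m,μ,α} has a repeated real root: for α < 0, there exists z ∈ ℝ with h_{m,μ,α}(z) = 0 and h′_{m,μ,α}(z) = 0 if and only if α = α_m(μ). -/

import Mathlib

/-- The characteristic quartic `h_{m,μ,α}(z) = z⁴ − 2m²z² − αz + m⁴ + μm²` of the ODE
`ψ⁗ − 2m²ψ″ − αψ′ + (m⁴ + μm²)ψ = 0`. -/
noncomputable def hQuartic (m : ℕ) (μ α : ℝ) : ℝ → ℝ :=
  fun z => z ^ 4 - 2 * (m : ℝ) ^ 2 * z ^ 2 - α * z + (m : ℝ) ^ 4 + μ * (m : ℝ) ^ 2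

/-- The critical value
`α_m(μ) = −(4m/(3√3)) (√(4m² + 3μ) − 2m) √(m² + m√(4m² + 3μ))`. -/
noncomputable def alphaCrit (m : ℕ) (μ : ℝ) : ℝ :=
  -(4 * (m : ℝ) / (3 * Real.sqrt 3)) * (Real.sqrt (4 * (m : ℝ) ^ 2 + 3 * μ) - 2 * (m : ℝ)) *
    Real.sqrt ((m : ℝ) ^ 2 + (m : ℝ) * Real.sqrt (4 * (m : ℝ) ^ 2 + 3 * μ))

lemma hQuartic_deriv (m : ℕ) (μ α : ℝ) (z : ℝ) :
    deriv (hQuartic m μ α) z = 4 * z ^ 3 - 4 * (m : ℝ) ^ 2 * z - α := by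
  have h1 : HasDerivAt (fun z : ℝ => z ^ 4) (4 * z ^ 3) z := by
    simpa using hasDerivAt_pow 4 z
  have h2 : HasDerivAt (fun z : ℝ => 2 * (m : ℝ) ^ 2 * z ^ 2) (2 * (m : ℝ) ^ 2 * (2 * z)) z := by
    simpa using (hasDerivAt_pow 2 z).const_mul (2 * (m : ℝ) ^ 2)
  have h3 : HasDerivAt (fun z : ℝ => α * z) α z := by
    simpa using (hasDerivAt_id z).const_mul α
  have H := (((h1.sub h2).sub h3).add_const ((m : ℝ) ^ 4)).add_const (μ * (m : ℝ) ^ 2)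
  have H' : HasDerivAt (hQuartic m μ α) (4 * z ^ 3 - 4 * (m : ℝ) ^ 2 * z - α) z := by
    convert H using 1
    · rfl
    · rfl
    · rfl
    ring
  exact H'.deriv

lemma alphaCrit_eq (m : ℕ) (μ : ℝ) :
    alphaCrit m μ = -(4 * (m : ℝ) / 3) * (Real.sqrt (4 * (m : ℝ) ^ 2 + 3 * μ) - 2 * (m : ℝ)) *
      Real.sqrt (((m : ℝ) ^ 2 + (m : ℝ) * Real.sqrt (4 * (m : ℝ) ^ 2 + 3 * μ)) / 3) := by
  unfold alphaCrit
  have h3 : Real.sqrt ((m : ℝ) ^ 2 + (m : ℝ) * Real.sqrt (4 * (m : ℝ) ^ 2 + 3 * μ))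
      = Real.sqrt 3 * Real.sqrt (((m : ℝ) ^ 2 + (m : ℝ) * Real.sqrt (4 * (m : ℝ) ^ 2 + 3 * μ)) / 3) := by
    rw [← Real.sqrt_mul (by norm_num : (0:ℝ) ≤ 3)]
    congr 1
    ring
  rw [h3]
  have h33 : Real.sqrt 3 * Real.sqrt 3 = 3 := Real.mul_self_sqrt (by norm_num)
  have hne : Real.sqrt 3 ≠ 0 := by positivity
  field_simp

/-- For every positive integer `m` and every `μ > 0`, `α_m(μ)` is the unique negative
value of `α` for which `h_{m,μ,α}` has a repeated real root: for `α < 0`, there exists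
`z ∈ ℝ` with `h_{m,μ,α}(z) = 0` and `h'_{m,μ,α}(z) = 0` if and only if `α = α_m(μ)`. -/
theorem alphaCrit_unique_repeated_root (m : ℕ) (hm : 0 < m) (μ : ℝ) (hμ : 0 < μ)
    (α : ℝ) (hα : α < 0) :
    (∃ z : ℝ, hQuartic m μ α z = 0 ∧ deriv (hQuartic m μ α) z = 0) ↔ α = alphaCrit m μ := by
  have hM0 : (0:ℝ) < (m : ℝ) := by exact_mod_cast hm
  set M : ℝ := (m : ℝ) with hM
  have hs0 : 0 ≤ Real.sqrt (4 * M ^ 2 + 3 * μ) := Real.sqrt_nonneg _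
  set s : ℝ := Real.sqrt (4 * M ^ 2 + 3 * μ) with hsdef
  have hs2 : s ^ 2 = 4 * M ^ 2 + 3 * μ := Real.sq_sqrt (by nlinarith)
  have hs2M : 2 * M < s := by nlinarith [hs2, hs0, hμ, hM0]
  have ht0 : (0:ℝ) < (M ^ 2 + M * s) / 3 := by nlinarith
  set r : ℝ := Real.sqrt ((M ^ 2 + M * s) / 3) with hrdef
  have hr0 : 0 < r := Real.sqrt_pos.mpr ht0
  have hr2 : r ^ 2 = (M ^ 2 + M * s) / 3 := Real.sq_sqrt ht0.le
  have hAC : alphaCrit m μ = -(4 * M / 3) * (s - 2 * M) * r := by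
    rw [alphaCrit_eq]
  constructor
  · rintro ⟨z, hz, hz'⟩
    rw [hQuartic_deriv] at hz'
    simp only [hQuartic] at hz
    rw [← hM] at hz hz'
    have hα2 : α = 4 * z ^ 3 - 4 * M ^ 2 * z := by linarith
    have hfac : (3 * z ^ 2 - (M ^ 2 + M * s)) * (3 * z ^ 2 - (M ^ 2 - M * s)) = 0 := by
      linear_combination (-3) * hz + (-3 * z) * hα2 + (-(M ^ 2)) * hs2
    have hpos : 0 < 3 * z ^ 2 - (M ^ 2 - M * s) := by nlinarith [sq_nonneg z, hs2M, hM0]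
    have hzz : 3 * z ^ 2 = M ^ 2 + M * s := by
      rcases mul_eq_zero.mp hfac with h | h
      · linarith
      · linarith
    have h2 : (z - r) * (z + r) = 0 := by linear_combination (1/3) * hzz - hr2
    have hrM : M ^ 2 < r ^ 2 := by rw [hr2]; nlinarith [hs2M, hM0]
    rcases mul_eq_zero.mp h2 with h | h
    · exfalso
      have hzr : z = r := by linarith
      have : 0 < α := by
        rw [hα2, hzr]
        nlinarith [mul_pos hr0 (sub_pos.mpr hrM)]
      linarith
    · have hzr : z = -r := by linarith
      rw [hAC, hα2, hzr]
      linear_combination (-4 * r) * hr2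
  · intro hαeq
    have hα' : α = -(4 * M / 3) * (s - 2 * M) * r := by rw [hαeq, hAC]
    refine ⟨-r, ?_, ?_⟩
    · simp only [hQuartic]
      rw [← hM]
      linear_combination r * hα' + (r ^ 2 + (M ^ 2 + M * s) / 3 - 2 * M ^ 2
        - (4 * M / 3) * (s - 2 * M)) * hr2 + (-(M ^ 2) / 3) * hs2
    · rw [hQuartic_deriv, ← hM]
      linear_combination -hα' - 4 * r * hr2
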